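/- For every integer k ≥ 1, the divergent series 1^k - 2^k + 3^k - 4^k + ⋯ is Abel summable with Abel sum equal to ((2^{k+1} - 1)/(k+1)) · B_{k+1}; that is, for 0 ≤ x < 1 the series Σ_{n≥0} (-1)^n (n+1)^k x^n converges, and its limit as x → 1⁻ equals ((2^{k+1} - 1)/(k+1)) · B_{k+1}. -/

import Mathlib

open Filter Topology Finset PowerSeries

noncomputable def Bq : PowerSeries ℚ := bernoulliPowerSeries ℚ
noncomputable def Eq' : PowerSeries ℚ := PowerSeries.exp ℚ

lemma rescale_two_B_mul : (rescale (2:ℚ) Bq) * (Eq' + 1) = PowerSeries.C (R := ℚ) 2 * Bq := by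
  have h1 : Bq * (Eq' - 1) = PowerSeries.X := bernoulliPowerSeries_mul_exp_sub_one ℚ
  have h2 : rescale (2:ℚ) (Bq * (Eq' - 1)) = rescale 2 PowerSeries.X := by rw [h1]
  rw [map_mul, map_sub, map_one, rescale_X] at h2
  have h3 : rescale (2:ℚ) Eq' = Eq' * Eq' := by
    have := exp_mul_exp_eq_exp_add (1:ℚ) 1
    rw [rescale_one] at this
    norm_num at this
    exact this.symm
  rw [h3] at h2
  have hE : (Eq' * Eq' - 1) = (Eq' - 1) * (Eq' + 1) := by ring
  rw [hE, ← mul_assoc] at h2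
  have hne : (Eq' - 1) ≠ 0 := by
    intro h
    have := congr_arg (PowerSeries.coeff (R := ℚ) 1) h
    simp [Eq', PowerSeries.coeff_exp] at this
  apply mul_right_cancel₀ hne
  calc rescale (2:ℚ) Bq * (Eq' + 1) * (Eq' - 1)
      = rescale (2:ℚ) Bq * (Eq' - 1) * (Eq' + 1) := by ring
    _ = PowerSeries.C (R := ℚ) 2 * PowerSeries.X := h2
    _ = PowerSeries.C (R := ℚ) 2 * (Bq * (Eq' - 1)) := by rw [h1]
    _ = PowerSeries.C (R := ℚ) 2 * Bq * (Eq' - 1) := by ring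

lemma keyK (m : ℕ) : ∑ i ∈ range (m+1), (m.choose i : ℚ) * 2^i * bernoulli i
    = (2 - 2^m) * bernoulli m := by
  have h := congr_arg (PowerSeries.coeff (R := ℚ) m) rescale_two_B_mul
  rw [PowerSeries.coeff_mul, Nat.sum_antidiagonal_eq_sum_range_succ_mk] at h
  simp only [coeff_rescale, Bq, Eq', bernoulliPowerSeries, PowerSeries.coeff_mk,
    PowerSeries.coeff_exp, map_add, PowerSeries.coeff_one, PowerSeries.coeff_C_mul,
    Algebra.algebraMap_self, RingHom.id_apply, map_one] at h
  simp only [mul_add] at h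
  rw [Finset.sum_add_distrib] at h
  have h2 : ∑ x ∈ Finset.range m.succ,
      2 ^ x * (bernoulli x / (x.factorial : ℚ)) * (if m - x = 0 then 1 else 0)
      = 2 ^ m * (bernoulli m / (m.factorial : ℚ)) := by
    rw [Finset.sum_eq_single m]
    · simp
    · intro x hx hxm
      have : m - x ≠ 0 := by
        have := Finset.mem_range.mp hx; omega
      simp [this]
    · intro hm; exact absurd (Finset.self_mem_range_succ m) hm
  rw [h2] at h
  have hfac : (m.factorial : ℚ) ≠ 0 := Nat.cast_ne_zero.mpr m.factorial_ne_zero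
  have key : ∀ x ∈ Finset.range (m+1), (m.choose x : ℚ) * 2^x * bernoulli x
      = (m.factorial : ℚ) * (2 ^ x * (bernoulli x / (x.factorial : ℚ)) * (1 / ((m - x).factorial : ℚ))) := by
    intro x hx
    have hxm := Nat.lt_succ_iff.mp (Finset.mem_range.mp hx)
    rw [Nat.cast_choose ℚ hxm]
    have hx1 : (x.factorial : ℚ) ≠ 0 := Nat.cast_ne_zero.mpr x.factorial_ne_zero
    have hx2 : ((m - x).factorial : ℚ) ≠ 0 := Nat.cast_ne_zero.mpr (m - x).factorial_ne_zero
    field_simp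
  rw [Finset.sum_congr rfl key, ← Finset.mul_sum]
  have h3 : ∑ x ∈ Finset.range (m+1),
      2 ^ x * (bernoulli x / (x.factorial : ℚ)) * (1 / ((m - x).factorial : ℚ))
      = 2 * (bernoulli m / (m.factorial : ℚ)) - 2 ^ m * (bernoulli m / (m.factorial : ℚ)) := by
    rw [← h]; ring
  rw [h3]
  field_simp

noncomputable def dq : ℕ → ℚ := fun i => (2^(i+1) - 1)/(i+1) * bernoulli (i+1)

noncomputable def nuq : ℕ → ℚ := fun i => dq i + (if i = 0 then 1 else 0)

lemma claimA' (n : ℕ) : (n+1 : ℚ) * (∑ i ∈ Finset.range (n+1), (n.choose i : ℚ) * dq i)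
    = (1 - 2^(n+1)) * bernoulli (n+1) - (if n = 0 then 1 else 0) := by
  rw [Finset.mul_sum]
  have step : ∀ i ∈ Finset.range (n+1), (n+1 : ℚ) * ((n.choose i : ℚ) * dq i)
      = ((n+1).choose (i+1) : ℚ) * (2^(i+1) * bernoulli (i+1))
        - ((n+1).choose (i+1) : ℚ) * bernoulli (i+1) := by
    intro i hi
    have hc : ((n+1) * n.choose i : ℚ) = (((n+1).choose (i+1) : ℕ) : ℚ) * (i+1) := by
      have := Nat.add_one_mul_choose_eq n i
      exact_mod_cast congr_arg (fun t : ℕ => (t : ℚ)) this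
    have hi1 : ((i : ℚ) + 1) ≠ 0 := by positivity
    unfold dq
    field_simp
    linear_combination ((2^(i+1)-1) * bernoulli (i+1)) * hc
  rw [Finset.sum_congr rfl step, Finset.sum_sub_distrib]
  have e1 : ∑ i ∈ Finset.range (n+1), ((n+1).choose (i+1) : ℚ) * (2^(i+1) * bernoulli (i+1))
      = ∑ j ∈ Finset.range (n+2), ((n+1).choose j : ℚ) * 2^j * bernoulli j - 1 := by
    rw [Finset.sum_range_succ' (fun j => ((n+1).choose j : ℚ) * 2^j * bernoulli j) (n+1)]
    simp [mul_assoc]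
  have e2 : ∑ i ∈ Finset.range (n+1), ((n+1).choose (i+1) : ℚ) * bernoulli (i+1)
      = ∑ j ∈ Finset.range (n+2), ((n+1).choose j : ℚ) * bernoulli j - 1 := by
    rw [Finset.sum_range_succ' (fun j => ((n+1).choose j : ℚ) * bernoulli j) (n+1)]
    simp
  rw [e1, e2, keyK (n+1)]
  rw [Finset.sum_range_succ, sum_bernoulli (n+1)]
  have : (if n + 1 = 1 then (1:ℚ) else 0) = (if n = 0 then (1:ℚ) else 0) := by
    by_cases h : n = 0 <;> simp [h]
  rw [this]
  simp only [Nat.choose_self, Nat.cast_one, one_mul]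
  ring

lemma nurec (n : ℕ) : ∑ i ∈ Finset.range (n+1), (n.choose i : ℚ) * nuq i + nuq n = 1 := by
  have hn1 : ((n:ℚ)+1) ≠ 0 := by positivity
  have hA := claimA' n
  have hsplit : ∑ i ∈ Finset.range (n+1), (n.choose i : ℚ) * nuq i
      = ∑ i ∈ Finset.range (n+1), (n.choose i : ℚ) * dq i + 1 := by
    unfold nuq
    rw [Finset.sum_congr rfl (fun i _ => by rw [mul_add]), Finset.sum_add_distrib]
    congr 1
    rw [Finset.sum_eq_single 0]
    · simp
    · intro x hx hx0; simp [hx0]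
    · intro h; simp at h
  rw [hsplit]
  have hd : ∑ i ∈ Finset.range (n+1), (n.choose i : ℚ) * dq i
      = ((1 - 2^(n+1)) * bernoulli (n+1) - (if n = 0 then 1 else 0)) / (n+1) := by
    field_simp [hA]; linarith [hA]
  rw [hd]
  unfold nuq dq
  by_cases h : n = 0
  · subst h; norm_num [bernoulli_one]
  · simp only [h, if_false]
    field_simp
    ring

noncomputable def Tf (n : ℕ) (x : ℝ) : ℝ := ∑' m : ℕ, (-1 : ℝ) ^ m * ((m : ℝ) + 1) ^ n * x ^ m

lemma summableT (n : ℕ) {x : ℝ} (h0 : 0 ≤ x) (h1 : x < 1) :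
    Summable (fun m : ℕ => (-1 : ℝ) ^ m * ((m : ℝ) + 1) ^ n * x ^ m) := by
  have hx : ‖x‖ < 1 := by rwa [Real.norm_eq_abs, abs_of_nonneg h0]
  have hg : Summable (fun m : ℕ => ((m : ℝ) + 1) ^ n * x ^ m) := by
    have : ∀ m : ℕ, ((m : ℝ) + 1) ^ n * x ^ m
        = ∑ j ∈ range (n+1), ((m:ℝ)^j * x^m) * (1^(n-j) * (n.choose j : ℝ)) := by
      intro m
      rw [add_pow, Finset.sum_mul]
      exact Finset.sum_congr rfl fun j _ => by ring
    rw [funext this]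
    apply summable_sum
    intro j _
    exact ((summable_pow_mul_geometric_of_norm_lt_one j hx).mul_right _)
  apply Summable.of_norm_bounded hg
  intro m
  rw [norm_mul, norm_mul, norm_pow, norm_neg, norm_one, one_pow, one_mul]
  rw [Real.norm_eq_abs, Real.norm_eq_abs, abs_of_nonneg (by positivity), abs_of_nonneg (by positivity)]

lemma starEq (n : ℕ) {x : ℝ} (h0 : 0 ≤ x) (h1 : x < 1) :
    Tf n x = 1 - x * ∑ i ∈ range (n+1), (n.choose i : ℝ) * Tf i x := by
  set A : ℕ → ℝ := fun m => (-1 : ℝ) ^ m * ((m : ℝ) + 2) ^ n * x ^ (m+1) with hA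
  have hsum : ∀ i : ℕ, Summable (fun m : ℕ => (-1 : ℝ) ^ m * ((m : ℝ) + 1) ^ i * x ^ m) :=
    fun i => summableT i h0 h1
  have hAsum : Summable A := by
    have := ((summable_nat_add_iff 1).mpr (hsum n)).neg
    apply this.congr
    intro m
    push_cast
    ring
  have h1' : x * ∑ i ∈ range (n+1), (n.choose i : ℝ) * Tf i x = ∑' m, A m := by
    have e1 : ∀ i ∈ range (n+1), (n.choose i : ℝ) * Tf i x
        = ∑' m : ℕ, (n.choose i : ℝ) * ((-1 : ℝ) ^ m * ((m : ℝ) + 1) ^ i * x ^ m) := by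
      intro i _
      rw [Tf, tsum_mul_left]
    rw [Finset.sum_congr rfl e1, ← Summable.tsum_finsetSum (fun i _ => (hsum i).mul_left _), ← tsum_mul_left]
    congr 1
    funext m
    rw [Finset.mul_sum]
    have hbin : ((m : ℝ) + 2) ^ n
        = ∑ i ∈ range (n+1), ((m:ℝ)+1)^i * 1^(n-i) * (n.choose i : ℝ) := by
      have := add_pow ((m:ℝ)+1) 1 n
      rw [← this]; ring_nf
    rw [hA]
    simp only
    rw [hbin, Finset.mul_sum, Finset.sum_mul]
    apply Finset.sum_congr rfl
    intro i _
    ring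
  have h2 : Tf n x = 1 - ∑' m, A m := by
    rw [Tf, (hsum n).tsum_eq_zero_add]
    have e : (∑' (b : ℕ), (-1 : ℝ) ^ (b+1) * (((b+1 : ℕ) : ℝ) + 1) ^ n * x ^ (b+1))
        = - ∑' m, A m := by
      rw [← tsum_neg]
      exact tsum_congr fun m => by simp only [hA]; push_cast; ring
    rw [e]
    norm_num [sub_eq_add_neg]
  rw [h2, h1']

noncomputable def mu : ℕ → ℝ
  | n => (1 - ∑ i : Fin n, ((n.choose i : ℝ)) * mu i) / 2
decreasing_by exact i.isLt

lemma mu_spec (n : ℕ) : mu n = (1 - ∑ i ∈ range n, (n.choose i : ℝ) * mu i) / 2 := by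
  rw [mu, ← Fin.sum_univ_eq_sum_range]

lemma tendstoT : ∀ n : ℕ, Tendsto (fun x => Tf n x) (𝓝[Set.Ico (0:ℝ) 1] 1) (𝓝 (mu n)) := by
  intro n
  induction n using Nat.strong_induction_on with
  | _ n ih =>
    have hx : Tendsto (fun x : ℝ => x) (𝓝[Set.Ico (0:ℝ) 1] 1) (𝓝 1) :=
      tendsto_id.mono_left nhdsWithin_le_nhds
    have hs : Tendsto (fun x : ℝ => ∑ i ∈ range n, (n.choose i : ℝ) * Tf i x)
        (𝓝[Set.Ico (0:ℝ) 1] 1) (𝓝 (∑ i ∈ range n, (n.choose i : ℝ) * mu i)) := by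
      apply tendsto_finset_sum
      intro i hi
      exact ((ih i (mem_range.mp hi)).const_mul _)
    have hmain : Tendsto (fun x : ℝ => (1 - x * ∑ i ∈ range n, (n.choose i : ℝ) * Tf i x) / (1 + x))
        (𝓝[Set.Ico (0:ℝ) 1] 1) (𝓝 (mu n)) := by
      have h2 : (1 - 1 * ∑ i ∈ range n, (n.choose i : ℝ) * mu i) / (1 + 1) = mu n := by
        rw [mu_spec n]; ring
      rw [← h2]
      exact ((tendsto_const_nhds.sub (hx.mul hs)).div
        (tendsto_const_nhds.add hx) (by norm_num))
    apply hmain.congr'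
    filter_upwards [self_mem_nhdsWithin] with x hx'
    obtain ⟨h0, h1⟩ := hx'
    have hstar := starEq n h0 h1
    rw [Finset.sum_range_succ, Nat.choose_self, Nat.cast_one, one_mul, mul_add] at hstar
    have hne : (1 : ℝ) + x ≠ 0 := by positivity
    field_simp
    linarith [hstar]

lemma mu_eq_nuq : ∀ n : ℕ, mu n = (nuq n : ℝ) := by
  intro n
  induction n using Nat.strong_induction_on with
  | _ n ih =>
    rw [mu_spec n]
    have hq : nuq n = (1 - ∑ i ∈ range n, (n.choose i : ℚ) * nuq i) / 2 := by
      have h := nurec n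
      rw [Finset.sum_range_succ, Nat.choose_self, Nat.cast_one, one_mul] at h
      linarith [h]
    rw [hq]
    push_cast
    congr 1
    congr 1
    apply Finset.sum_congr rfl
    intro i hi
    rw [ih i (mem_range.mp hi)]

theorem abel_sum_alternating_powers (k : ℕ) (hk : 1 ≤ k) :
    (∀ x : ℝ, 0 ≤ x → x < 1 →
      Summable (fun n : ℕ => (-1 : ℝ) ^ n * ((n : ℝ) + 1) ^ k * x ^ n)) ∧
    Tendsto (fun x : ℝ => ∑' n : ℕ, (-1 : ℝ) ^ n * ((n : ℝ) + 1) ^ k * x ^ n)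
      (𝓝[Set.Ico (0 : ℝ) 1] 1)
      (𝓝 (((2 ^ (k + 1) - 1 : ℝ) / (k + 1)) * (bernoulli (k + 1) : ℝ))) := by
  constructor
  · exact fun x h0 h1 => summableT k h0 h1
  · have hval : (((2 ^ (k + 1) - 1 : ℝ) / (k + 1)) * (bernoulli (k + 1) : ℝ)) = mu k := by
      rw [mu_eq_nuq k]
      have hk0 : k ≠ 0 := by omega
      unfold nuq dq
      simp only [hk0, if_false]
      push_cast
      ring
    rw [hval]
    exact tendstoT k
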